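/- Fix ã > 0 and n ≥ 0. As q → 1⁻ with α/a = (1-q)·ã held fixed, the q-Poisson probability (α/a; q)_∞ · (α/a)^n / (q; q)_n converges to the Poisson probability e^{-ã} · ã^n / n!. -/

import Mathlib

open Filter Real

/-- The infinite q-Pochhammer symbol `(x; q)_∞`. -/
noncomputable def qPochInf (x q : ℝ) : ℝ := ∏' ℓ : ℕ, (1 - x * q ^ ℓ)

/-- The finite q-Pochhammer symbol `(a; q)_n`. -/
def qPoch (a q : ℝ) (n : ℕ) : ℝ := ∏ ℓ ∈ Finset.range n, (1 - a * q ^ ℓ)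

lemma log_one_sub_le {t : ℝ} (h1 : t < 1) : Real.log (1 - t) ≤ -t := by
  have := Real.log_le_sub_one_of_pos (x := 1 - t) (by linarith)
  linarith

lemma le_log_one_sub {t : ℝ} (h1 : t < 1) : -(t / (1 - t)) ≤ Real.log (1 - t) := by
  have hpos : 0 < 1 - t := by linarith
  have h := Real.log_le_sub_one_of_pos (x := (1 - t)⁻¹) (by positivity)
  rw [Real.log_inv] at h
  have : (1 - t)⁻¹ - 1 = t / (1 - t) := by field_simp; ring
  linarith

section core
variable {x q : ℝ} (hx0 : 0 < x) (hx1 : x < 1) (hq0 : 0 < q) (hq1 : q < 1)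
include hx0 hx1 hq0 hq1

lemma t_mem (ℓ : ℕ) : 0 < x * q ^ ℓ ∧ x * q ^ ℓ ≤ x := by
  refine ⟨by positivity, ?_⟩
  nlinarith [pow_le_one₀ hq0.le hq1.le (n := ℓ)]

lemma log_summable : Summable (fun ℓ : ℕ => Real.log (1 - x * q ^ ℓ)) := by
  apply Summable.of_norm_bounded (g := fun ℓ => x / (1 - x) * q ^ ℓ)
    ((summable_geometric_of_lt_one hq0.le hq1).mul_left _)
  intro ℓ
  obtain ⟨ht0, htx⟩ := t_mem hx0 hx1 hq0 hq1 ℓ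
  have ht1 : x * q ^ ℓ < 1 := lt_of_le_of_lt htx hx1
  have hub := log_one_sub_le ht1
  have hlb := le_log_one_sub ht1
  have h1x : 0 < 1 - x := by linarith
  have key : x * q ^ ℓ / (1 - x * q ^ ℓ) ≤ x / (1 - x) * q ^ ℓ := by
    rw [div_le_iff₀ (by linarith), div_mul_eq_mul_div, div_mul_eq_mul_div,
      le_div_iff₀ h1x]
    nlinarith [pow_pos hq0 ℓ, pow_le_one₀ hq0.le hq1.le (n := ℓ)]
  rw [Real.norm_eq_abs, abs_le]
  constructor
  · linarith
  · linarith [ht0]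

lemma log_tsum_bounds :
    -(x * (1 - q)⁻¹ / (1 - x)) ≤ (∑' ℓ : ℕ, Real.log (1 - x * q ^ ℓ)) ∧
    (∑' ℓ : ℕ, Real.log (1 - x * q ^ ℓ)) ≤ -(x * (1 - q)⁻¹) := by
  have hgeo : HasSum (fun ℓ : ℕ => x * q ^ ℓ) (x * (1 - q)⁻¹) :=
    (hasSum_geometric_of_lt_one hq0.le hq1).mul_left x
  have hsum := (log_summable hx0 hx1 hq0 hq1).hasSum
  have h1x : 0 < 1 - x := by linarith
  constructor
  · refine hasSum_le ?_ ((hgeo.div_const (1 - x)).neg) hsum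
    intro ℓ
    obtain ⟨ht0, htx⟩ := t_mem hx0 hx1 hq0 hq1 ℓ
    have ht1 : x * q ^ ℓ < 1 := lt_of_le_of_lt htx hx1
    have hlb := le_log_one_sub ht1
    have : x * q ^ ℓ / (1 - x * q ^ ℓ) ≤ x * q ^ ℓ / (1 - x) := by
      apply div_le_div_of_nonneg_left ht0.le h1x (by linarith)
    linarith
  · refine hasSum_le ?_ hsum hgeo.neg
    intro ℓ
    obtain ⟨ht0, htx⟩ := t_mem hx0 hx1 hq0 hq1 ℓ
    exact log_one_sub_le (lt_of_le_of_lt htx hx1)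

lemma qPochInf_eq_exp :
    qPochInf x q = Real.exp (∑' ℓ : ℕ, Real.log (1 - x * q ^ ℓ)) := by
  have hsum := (log_summable hx0 hx1 hq0 hq1).hasSum
  have hprod := hsum.rexp
  have heq : (Real.exp ∘ fun ℓ : ℕ => Real.log (1 - x * q ^ ℓ)) =
      fun ℓ : ℕ => 1 - x * q ^ ℓ := by
    funext ℓ
    obtain ⟨ht0, htx⟩ := t_mem hx0 hx1 hq0 hq1 ℓ
    exact Real.exp_log (by linarith)
  rw [heq] at hprod
  exact hprod.tprod_eq.symm ▸ rfl

end core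

section main
variable (atil : ℝ) (hatil : 0 < atil)

include hatil in
lemma mem_filter_basic :
    ∀ᶠ q in nhdsWithin (1:ℝ) (Set.Iio 1),
      0 < q ∧ q < 1 ∧ 0 < (1 - q) * atil ∧ (1 - q) * atil < 1 := by
  have hlt : max (1/2 : ℝ) (1 - 1/(2*atil)) < 1 := by
    apply max_lt (by norm_num)
    have : 0 < 1/(2*atil) := by positivity
    linarith
  filter_upwards [Ioo_mem_nhdsLT_of_mem (Set.mem_Ioc.mpr ⟨hlt, le_refl 1⟩)]
    with q hq
  obtain ⟨hq1, hq2⟩ := hq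
  have hqh : (1/2 : ℝ) < q := lt_of_le_of_lt (le_max_left _ _) hq1
  have hqa : 1 - 1/(2*atil) < q := lt_of_le_of_lt (le_max_right _ _) hq1
  refine ⟨by linarith, hq2, by nlinarith, ?_⟩
  have h2a : 0 < 2 * atil := by positivity
  have : 1 - q < 1/(2*atil) := by linarith
  have := mul_lt_mul_of_pos_right this hatil
  rw [div_mul_eq_mul_div, one_mul] at this
  have : (1-q) * atil < 1/2 := by
    calc (1-q)*atil < atil / (2*atil) := this
      _ = 1/2 := by field_simp
  linarith

include hatil in
lemma L1 : Tendsto (fun q : ℝ => qPochInf ((1 - q) * atil) q)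
    (nhdsWithin 1 (Set.Iio 1)) (nhds (Real.exp (-atil))) := by
  set S : ℝ → ℝ := fun q => ∑' ℓ : ℕ, Real.log (1 - (1 - q) * atil * q ^ ℓ) with hS
  have hlow : Tendsto (fun q : ℝ => -(atil / (1 - (1 - q) * atil)))
      (nhdsWithin 1 (Set.Iio 1)) (nhds (-atil)) := by
    have hc : ContinuousAt (fun q : ℝ => -(atil / (1 - (1 - q) * atil))) 1 := by
      apply ContinuousAt.neg
      apply ContinuousAt.div (by fun_prop) (by fun_prop)
      norm_num
    have h1 := hc.tendsto
    rw [show -(atil / (1 - (1-(1:ℝ))*atil)) = -atil by norm_num] at h1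
    exact h1.mono_left nhdsWithin_le_nhds
  have hStends : Tendsto S (nhdsWithin (1:ℝ) (Set.Iio 1)) (nhds (-atil)) := by
    apply tendsto_of_tendsto_of_tendsto_of_le_of_le' hlow tendsto_const_nhds
    · filter_upwards [mem_filter_basic atil hatil] with q hq
      obtain ⟨hq0, hq1, hx0, hx1⟩ := hq
      have hb := (log_tsum_bounds hx0 hx1 hq0 hq1).1
      have hne : (1 - q) ≠ 0 := by linarith
      have : (1 - q) * atil * (1 - q)⁻¹ = atil := by field_simp
      rw [this] at hb
      exact hb
    · filter_upwards [mem_filter_basic atil hatil] with q hq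
      obtain ⟨hq0, hq1, hx0, hx1⟩ := hq
      have hb := (log_tsum_bounds hx0 hx1 hq0 hq1).2
      have hne : (1 - q) ≠ 0 := by linarith
      have : (1 - q) * atil * (1 - q)⁻¹ = atil := by field_simp
      rw [this] at hb
      exact hb
  have := (Real.continuous_exp.tendsto _).comp hStends
  apply Tendsto.congr' _ this
  filter_upwards [mem_filter_basic atil hatil] with q hq
  obtain ⟨hq0, hq1, hx0, hx1⟩ := hq
  exact (qPochInf_eq_exp hx0 hx1 hq0 hq1).symm


include hatil in
lemma L2 (n : ℕ) : Tendsto (fun q : ℝ => ((1 - q) * atil) ^ n / qPoch q q n)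
    (nhdsWithin 1 (Set.Iio 1)) (nhds (atil ^ n / n.factorial)) := by
  set P : ℝ → ℝ := fun q => ∏ ℓ ∈ Finset.range n, (∑ i ∈ Finset.range (ℓ+1), q ^ i)
    with hPdef
  have hfact : ∀ q : ℝ, qPoch q q n = (1 - q) ^ n * P q := by
    intro q
    rw [qPoch, hPdef]
    beta_reduce
    rw [show ((1:ℝ) - q) ^ n = ∏ _ℓ ∈ Finset.range n, (1 - q) by simp, ← Finset.prod_mul_distrib]
    apply Finset.prod_congr rfl
    intro ℓ _
    have := mul_geom_sum q (ℓ + 1)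
    have h2 : 1 - q * q ^ ℓ = 1 - q ^ (ℓ + 1) := by ring
    rw [h2]
    nlinarith [this]
  have hP1 : P 1 = (n.factorial : ℝ) := by
    rw [hPdef]
    simp only [one_pow, Finset.sum_const, Finset.card_range, nsmul_eq_mul, mul_one]
    rw [← Finset.prod_range_add_one_eq_factorial n, Nat.cast_prod]
  have hPcont : Continuous P := by
    rw [hPdef]
    exact continuous_finset_prod _ fun ℓ _ => continuous_finset_sum _ fun i _ => continuous_pow i
  have hlim : Tendsto (fun q : ℝ => atil ^ n / P q) (nhdsWithin 1 (Set.Iio 1))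
      (nhds (atil ^ n / n.factorial)) := by
    rw [← hP1]
    exact (tendsto_const_nhds.div (hPcont.tendsto 1) (by rw [hP1]; positivity)).mono_left
      nhdsWithin_le_nhds
  apply Tendsto.congr' _ hlim
  filter_upwards [self_mem_nhdsWithin] with q hq
  have hq1 : q < 1 := hq
  have hne : (1 - q) ^ n ≠ 0 := pow_ne_zero _ (by linarith)
  rw [hfact q, mul_pow, mul_div_mul_left _ _ (pow_ne_zero n (show (1:ℝ) - q ≠ 0 by linarith))]

end main

/-- As `q → 1⁻` with `α/a = (1-q)·ã` fixed, the q-Poisson probability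
`(x;q)_∞ x^n/(q;q)_n` (with `x = (1-q)ã`) converges to the Poisson probability
`e^{-ã} ã^n / n!`. Here `atil` plays the role of `ã`. -/
theorem qPoisson_to_poisson (atil : ℝ) (hatil : 0 < atil) (n : ℕ) :
    Tendsto (fun q : ℝ =>
        qPochInf ((1 - q) * atil) q * ((1 - q) * atil) ^ n / qPoch q q n)
      (nhdsWithin 1 (Set.Iio 1))
      (nhds (Real.exp (-atil) * atil ^ n / n.factorial)) := by
  simp only [mul_div_assoc]
  exact (L1 atil hatil).mul (L2 atil hatil n)
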